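/- Let β ∈ ℂ with |β| = 0.9 and arg β = π/16, and let α' = 0.025. Then all roots of the cubic p(x) = x(β̄_r(iα' − 2) − |β|²) + x²(2β_r − iα' + 1) + |β|² − x³, where β_r = Re(β) = 0.9 cos(π/16), have modulus strictly less than 1. -/

import Mathlib

open Complex

/-- If the real and imaginary parts are bounded, so is the complex absolute value. -/
lemma aux_abs_le_of_sq {a b ε : ℝ} (hε : 0 ≤ ε) (h : a ^ 2 + b ^ 2 ≤ ε ^ 2) :
    ‖(a : ℂ) + (b : ℂ) * I‖ ≤ ε := by
  have h1 : (‖(a : ℂ) + (b : ℂ) * I‖) ^ 2 = a ^ 2 + b ^ 2 := by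
    rw [Complex.sq_norm, Complex.normSq_add_mul_I]
  nlinarith [norm_nonneg ((a : ℂ) + (b : ℂ) * I)]

/-- Tight rational bounds on cos (π/16). -/
lemma aux_cos_pi_div_sixteen_bounds :
    (0.980785280403229 : ℝ) ≤ Real.cos (Real.pi / 16) ∧
      Real.cos (Real.pi / 16) ≤ 0.980785280403231 := by
  have h2 : Real.sqrt 2 ^ 2 = 2 := Real.sq_sqrt (by norm_num)
  have h2n : (0 : ℝ) ≤ Real.sqrt 2 := Real.sqrt_nonneg 2
  have l2 : (1.4142135623730950 : ℝ) ≤ Real.sqrt 2 := by nlinarith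
  have u2 : Real.sqrt 2 ≤ 1.4142135623730951 := by nlinarith
  have hu : Real.sqrt (2 + Real.sqrt 2) ^ 2 = 2 + Real.sqrt 2 :=
    Real.sq_sqrt (by linarith)
  have hun : (0 : ℝ) ≤ Real.sqrt (2 + Real.sqrt 2) := Real.sqrt_nonneg _
  have lu : (1.8477590650225735 : ℝ) ≤ Real.sqrt (2 + Real.sqrt 2) := by nlinarith
  have uu : Real.sqrt (2 + Real.sqrt 2) ≤ 1.8477590650225736 := by nlinarith
  have hv : Real.sqrt (2 + Real.sqrt (2 + Real.sqrt 2)) ^ 2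
      = 2 + Real.sqrt (2 + Real.sqrt 2) := Real.sq_sqrt (by linarith)
  have hvn : (0 : ℝ) ≤ Real.sqrt (2 + Real.sqrt (2 + Real.sqrt 2)) := Real.sqrt_nonneg _
  have lv : (1.961570560806458 : ℝ) ≤ Real.sqrt (2 + Real.sqrt (2 + Real.sqrt 2)) := by
    nlinarith
  have uv : Real.sqrt (2 + Real.sqrt (2 + Real.sqrt 2)) ≤ 1.961570560806462 := by
    nlinarith
  rw [Real.cos_pi_div_sixteen]
  constructor <;> nlinarith

set_option maxHeartbeats 1000000 in
theorem almost_positive_momentum_roots (β : ℂ)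
    (hmag : ‖β‖ = 0.9) (harg : Complex.arg β = Real.pi / 16) :
    ∀ x : ℂ,
      x * ((β.re : ℂ) * (I * (0.025 : ℂ) - 2) - (‖β‖ : ℂ) ^ 2)
          + x ^ 2 * (2 * (β.re : ℂ) - I * (0.025 : ℂ) + 1)
          + (‖β‖ : ℂ) ^ 2 - x ^ 3 = 0 →
        ‖x‖ < 1 := by
  have hb0 : β ≠ 0 := by
    intro h
    rw [h, norm_zero] at hmag
    norm_num at hmag
  -- real part of β
  have hcos := Complex.cos_arg hb0
  rw [harg, hmag] at hcos
  have hre : β.re = 0.9 * Real.cos (Real.pi / 16) := by rw [hcos]; ring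
  obtain ⟨hcl, hcu⟩ := aux_cos_pi_div_sixteen_bounds
  have hbl : (8827067523629 / 10000000000000 : ℝ) ≤ β.re := by rw [hre]; nlinarith
  have hbh : β.re ≤ (8827067523630 / 10000000000000 : ℝ) := by rw [hre]; nlinarith
  intro x hx
  rw [hmag] at hx
  have h09 : ((0.9 : ℝ) : ℂ) = ((9 / 10 : ℝ) : ℂ) := by norm_num
  rw [h09] at hx
  by_contra hge
  push_neg at hge
  set t : ℝ := ‖x‖ with htdef
  have ht0 : (0 : ℝ) ≤ t := norm_nonneg x
  -- approximate roots
  set r1 : ℂ := ((8399485745063 / 10000000000000 : ℝ) : ℂ)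
      + ((1920095575319 / 10000000000000 : ℝ) : ℂ) * I with hr1def
  set r2 : ℂ := ((9703485323250 / 10000000000000 : ℝ) : ℂ)
      + ((-706687599117 / 10000000000000 : ℝ) : ℂ) * I with hr2def
  set r3 : ℂ := ((9551163978945 / 10000000000000 : ℝ) : ℂ)
      + ((-1463407976202 / 10000000000000 : ℝ) : ℂ) * I with hr3def
  -- error coefficients
  set E2 : ℂ := ((2 * β.re - 17654135047258 / 10000000000000 : ℝ) : ℂ) with hE2def
  set E1 : ℂ := ((257541350472579514485022662 / 100000000000000000000000000
        - 2 * β.re - 81 / 100 : ℝ) : ℂ)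
      + ((25 / 1000 * β.re - 2206766880909047000262957 / 100000000000000000000000000 : ℝ) : ℂ)
        * I with hE1def
  set E0 : ℂ := ((7201997426164955179682457 / 1000000000000000000000000000000000000000 : ℝ) : ℂ)
      + ((17320776277809134039493591 / 1000000000000000000000000000000000000000 : ℝ) : ℂ)
        * I with hE0def
  -- the key exact algebraic identity
  push_cast at hx
  have key : (x - r1) * (x - r2) * (x - r3) = E2 * x ^ 2 + E1 * x + E0 := by
    rw [hr1def, hr2def, hr3def, hE2def, hE1def, hE0def]
    push_cast
    linear_combination (-1 : ℂ) * hx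
      + ((-992854799133891228753925849762849623/500000000000000000000000000000000000000 : ℂ) * I
        + (-3132618642958492349738127/100000000000000000000000000 : ℂ) * x
        + (31539193218270644891394610195293878793/1000000000000000000000000000000000000000 : ℂ))
        * Complex.I_sq
  -- bounds on the error coefficients
  have hE2b : ‖E2‖ ≤ 1e-9 := by
    rw [hE2def, Complex.norm_real, Real.norm_eq_abs, abs_le]
    constructor <;> nlinarith
  have hE1b : ‖E1‖ ≤ 1e-9 := by
    rw [hE1def]
    apply aux_abs_le_of_sq (by norm_num)
    nlinarith [mul_nonneg (sub_nonneg.2 hbl) (sub_nonneg.2 hbh)]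
  have hE0b : ‖E0‖ ≤ 1e-9 := by
    rw [hE0def]
    exact aux_abs_le_of_sq (by norm_num) (by norm_num)
  -- upper bound on |q(x)|
  have tri1 : ‖E2 * x ^ 2 + E1 * x + E0‖
      ≤ ‖E2 * x ^ 2 + E1 * x‖ + ‖E0‖ := norm_add_le _ _
  have tri2 : ‖E2 * x ^ 2 + E1 * x‖
      ≤ ‖E2 * x ^ 2‖ + ‖E1 * x‖ := norm_add_le _ _
  rw [norm_mul, norm_mul, norm_pow] at tri2
  have hm2 : ‖E2‖ * t ^ 2 ≤ 1e-9 * t ^ 2 :=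
    mul_le_mul_of_nonneg_right hE2b (sq_nonneg t)
  have hm1 : ‖E1‖ * t ≤ 1e-9 * t :=
    mul_le_mul_of_nonneg_right hE1b ht0
  have hup : ‖(x - r1) * (x - r2) * (x - r3)‖ ≤ 1e-9 * (t ^ 2 + t + 1) := by
    rw [key]
    linarith [tri1, tri2, hm2, hm1, hE0b]
  -- bounds on moduli of the approximate roots
  have hr1b : ‖r1‖ ≤ 0.8616156 := by
    rw [hr1def]; exact aux_abs_le_of_sq (by norm_num) (by norm_num)
  have hr2b : ‖r2‖ ≤ 0.9729185 := by
    rw [hr2def]; exact aux_abs_le_of_sq (by norm_num) (by norm_num)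
  have hr3b : ‖r3‖ ≤ 0.9662624 := by
    rw [hr3def]; exact aux_abs_le_of_sq (by norm_num) (by norm_num)
  -- lower bounds |x - rᵢ| ≥ t - mᵢ
  have hl1 : t - 0.8616156 ≤ ‖x - r1‖ := by
    have h := norm_sub_norm_le x r1
    linarith
  have hl2 : t - 0.9729185 ≤ ‖x - r2‖ := by
    have h := norm_sub_norm_le x r2
    linarith
  have hl3 : t - 0.9662624 ≤ ‖x - r3‖ := by
    have h := norm_sub_norm_le x r3
    linarith
  have hp1 : (0 : ℝ) ≤ t - 0.8616156 := by linarith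
  have hp2 : (0 : ℝ) ≤ t - 0.9729185 := by linarith
  have hp3 : (0 : ℝ) ≤ t - 0.9662624 := by linarith
  have hlow : (t - 0.8616156) * (t - 0.9729185) * (t - 0.9662624)
      ≤ ‖(x - r1) * (x - r2) * (x - r3)‖ := by
    rw [norm_mul, norm_mul]
    have h12 : (t - 0.8616156) * (t - 0.9729185)
        ≤ ‖x - r1‖ * ‖x - r2‖ :=
      mul_le_mul hl1 hl2 hp2 (norm_nonneg _)
    exact mul_le_mul h12 hl3 hp3
      (mul_nonneg (norm_nonneg _) (norm_nonneg _))
  -- combine and derive a contradiction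
  have hfin : (t - 0.8616156) * (t - 0.9729185) * (t - 0.9662624)
      ≤ 1e-9 * (t ^ 2 + t + 1) := le_trans hlow hup
  have h1 : (0 : ℝ) ≤ t - 1 := by linarith
  nlinarith [hfin, h1, mul_nonneg h1 h1, mul_nonneg (mul_nonneg h1 h1) h1]
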